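/- arXiv:1302.0587 — 2 statements merged into one kernel-verified Lean document; each statement's English description precedes it below -/
import Mathlib

section
/- For every sequence ε : ℕ → {0,1} and every n ≥ 0, d(p(n+1), −q'_ε(n+1)) = d(p(n), −q'_ε(n)) + 2·(−1)^{ε(n)}. (Equivalently, in terms of the knots K(n,i) this says d(K(n+1, i)) = d(K(n, i)) + 2·(−1)^{ε(n)+1}, since d(K(n,i)) = −d(p(n), −q'_ε(n)).) -/
/-- For integers `p > q > 0`, the diagonal element `d(p, q)` of the linking matrix of the
dihedral covering link of the 2-bridge knot `b(p,q)`: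
`d(p, q) = −∑_{k=1}^{p−1} (−1)^{⌊q·k/p⌋}`. -/
noncomputable def diagElem (p q : ℤ) : ℤ :=
  -∑ k ∈ Finset.Icc (1 : ℤ) (p - 1), ((⌊(q : ℚ) * (k : ℚ) / (p : ℚ)⌋).negOnePow : ℤ)

/-- `p(0) = 3`, `p(n+1) = p(n)·(4·p(n)² − 1)`. -/
def pSeq : ℕ → ℤ
  | 0 => 3
  | n + 1 => pSeq n * (4 * (pSeq n) ^ 2 - 1)

/-- `q'_ε(0) = −1`, `q'_ε(n+1) = q'_ε(n)·(4·p(n)² − 1) + 2·(−1)^{ε(n)+1}·p(n)`. -/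
def q'Seq (ε : ℕ → ℕ) : ℕ → ℤ
  | 0 => -1
  | n + 1 => q'Seq ε n * (4 * (pSeq n) ^ 2 - 1) + 2 * (-1 : ℤ) ^ (ε n + 1) * pSeq n


open Finset

/-- `(-1)^a` as an integer. -/
def np (a : ℤ) : ℤ := a.negOnePow

lemma np_add (a b : ℤ) : np (a + b) = np a * np b := by
  simp [np, Int.negOnePow_add]

lemma np_congr {a b : ℤ} (h : Even (a - b)) : np a = np b := by
  have := (Int.negOnePow_eq_iff a b).mpr h
  simp [np, this]

lemma np_zero : np 0 = 1 := by simp [np]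

lemma np_one : np 1 = -1 := by simp [np]

lemma np_succ (a : ℤ) : np (a + 1) = -np a := by
  simp [np, Int.negOnePow_succ]

lemma np_add_odd {p : ℤ} (a : ℤ) (hp : Odd p) : np (a + p) = -np a := by
  obtain ⟨c, rfl⟩ := hp
  rw [show a + (2*c+1) = (a + 2*c) + 1 by ring, np_succ,
    np_congr (a := a + 2*c) (b := a) ⟨c, by ring⟩]

/-- floor of integer division -/
lemma floor_int_div (a p : ℤ) (hp : 0 < p) : ⌊(a : ℚ) / (p : ℚ)⌋ = a / p := by
  obtain ⟨n, rfl⟩ : ∃ n : ℕ, p = n := ⟨p.toNat, (Int.toNat_of_nonneg hp.le).symm⟩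
  exact_mod_cast Rat.floor_intCast_div_natCast a n

/-- parity bridge -/
lemma parity_bridge (p q k : ℤ) (hp : 0 < p) (hpo : Odd p) (hqo : Odd q) :
    ((⌊(q : ℚ) * (k : ℚ) / (p : ℚ)⌋).negOnePow : ℤ) = np (k + (q * k) % p) := by
  have h1 : (q : ℚ) * (k : ℚ) = ((q * k : ℤ) : ℚ) := by push_cast; ring
  rw [h1, floor_int_div _ _ hp]
  show np ((q*k)/p) = _
  apply np_congr
  obtain ⟨a, ha⟩ := hpo
  obtain ⟨b, hb⟩ := hqo
  subst ha hb
  have hd := Int.mul_ediv_add_emod (((2*b+1))*k) (2*a+1)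
  exact ⟨a * ((((2*b+1))*k)/(2*a+1)) + ((((2*b+1))*k)/(2*a+1)) - b*k - k,
    by linear_combination -hd⟩

/-- the central sum, over `k ∈ [0, p-1]`. -/
noncomputable def ee (p q : ℤ) : ℤ := ∑ k ∈ Finset.Icc (0 : ℤ) (p - 1), np (k + (q * k) % p)

lemma emod_self_range {a p : ℤ} (h0 : 0 ≤ a) (h1 : a < p) : a % p = a :=
  Int.emod_eq_of_lt h0 h1

lemma diag_eq (p q : ℤ) (hp : 0 < p) (hpo : Odd p) (hqo : Odd q) :
    diagElem p q = 1 - ee p q := by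
  have hsplit : Finset.Icc (0:ℤ) (p-1) = insert 0 (Finset.Icc (1:ℤ) (p-1)) := by
    ext x; simp only [mem_Icc, mem_insert]; omega
  have h0 : (0:ℤ) ∉ Finset.Icc (1:ℤ) (p-1) := by simp
  rw [diagElem, ee, hsplit, Finset.sum_insert h0]
  have : ∀ k ∈ Finset.Icc (1:ℤ) (p-1),
      ((⌊(q : ℚ) * (k : ℚ) / (p : ℚ)⌋).negOnePow : ℤ) = np (k + (q * k) % p) :=
    fun k _ => parity_bridge p q k hp hpo hqo
  rw [Finset.sum_congr rfl this]
  have : np (0 + q * 0 % p) = 1 := by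
    rw [show (0:ℤ) + q * 0 % p = 0 by simp, np_zero]
  rw [this]; ring

/-- pairing cancellation over a doubled interval -/
lemma sum_cancel (P : ℤ) (hP : 0 < P) (ψ : ℤ → ℤ) (hψ : ∀ j, ψ (j + P) = -ψ j) :
    ∑ j ∈ Finset.Icc (0:ℤ) (2*P-1), ψ j = 0 := by
  have hsplit : Finset.Icc (0:ℤ) (2*P-1) =
      Finset.Icc (0:ℤ) (P-1) ∪ Finset.Icc P (2*P-1) := by
    ext x; simp only [mem_Icc, mem_union]; omega
  have hdisj : Disjoint (Finset.Icc (0:ℤ) (P-1)) (Finset.Icc P (2*P-1)) := by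
    rw [Finset.disjoint_left]; intro a ha hb
    simp only [mem_Icc] at ha hb; omega
  rw [hsplit, Finset.sum_union hdisj]
  have : ∑ j ∈ Finset.Icc P (2*P-1), ψ j = ∑ j ∈ Finset.Icc (0:ℤ) (P-1), ψ (j + P) := by
    apply Finset.sum_nbij' (fun j => j - P) (fun j => j + P)
    · intro a ha; simp only [mem_Icc] at *; omega
    · intro a ha; simp only [mem_Icc] at *; omega
    · intro a _; ring
    · intro a _; ring
    · intro a _; norm_num
  rw [this, Finset.sum_congr rfl (fun j _ => hψ j)]
  simp

lemma emod_ne_zero_of_coprime {P Q x : ℤ} (hP : 0 < P) (hco : IsCoprime P Q)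
    (hx1 : 1 ≤ x) (hx2 : x ≤ P - 1) : (Q * x) % P ≠ 0 := by
  intro h
  have hdvd : P ∣ Q * x := Int.dvd_of_emod_eq_zero h
  have : P ∣ x := (IsCoprime.dvd_of_dvd_mul_left hco hdvd)
  have := Int.le_of_dvd (by omega) this
  omega

lemma emod_sub_one {P Q x : ℤ} (hP : 0 < P) (hco : IsCoprime P Q)
    (hx1 : 1 ≤ x) (hx2 : x ≤ P - 1) : (Q * x - 1) % P = (Q * x) % P - 1 := by
  have hr0 : 0 ≤ (Q*x) % P := Int.emod_nonneg _ (by omega)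
  have hrP : (Q*x) % P < P := Int.emod_lt_of_pos _ hP
  have hne := emod_ne_zero_of_coprime hP hco hx1 hx2
  have hd := Int.mul_ediv_add_emod (Q*x) P
  have h : Q*x - 1 = ((Q*x)%P - 1) + P * ((Q*x)/P) := by linarith
  rw [h, Int.add_mul_emod_self_left]
  exact Int.emod_eq_of_lt (by omega) (by omega)

/-- flip: subtracting 1 inside emod flips sign, away from 0 -/
lemma np_emod_sub_one {P Q x : ℤ} (hP : 0 < P) (hco : IsCoprime P Q)
    (hx1 : 1 ≤ x) (hx2 : x ≤ P - 1) :
    np ((Q * x - 1) % P) = -np ((Q * x) % P) := by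
  have hr0 : 0 ≤ (Q*x) % P := Int.emod_nonneg _ (by omega)
  have hrP : (Q*x) % P < P := Int.emod_lt_of_pos _ hP
  have hne := emod_ne_zero_of_coprime hP hco hx1 hx2
  have key : (Q * x - 1) % P = (Q*x) % P - 1 := emod_sub_one hP hco hx1 hx2
  rw [key, show (Q*x)%P = ((Q*x)%P - 1) + 1 by ring, np_succ]
  ring

lemma emod_eq_of_eq_add_mul {P y r c : ℤ} (h : y = r + P * c) (h0 : 0 ≤ r) (h1 : r < P) :
    y % P = r := by
  rw [h, Int.add_mul_emod_self_left]; exact Int.emod_eq_of_lt h0 h1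

lemma emod_mul_eq {P M X r : ℤ} (hco : IsCoprime P M) (h1 : P ∣ X - r) (h2 : M ∣ X - r)
    (h0 : 0 ≤ r) (hr : r < P * M) : X % (P * M) = r := by
  obtain ⟨c, hc⟩ := hco.mul_dvd h1 h2
  exact emod_eq_of_eq_add_mul (by linarith) h0 hr

lemma claimA (P Q : ℤ) (hP : 0 < P) (hPo : Odd P) (hco : IsCoprime P Q) :
    ∑ x ∈ Finset.Icc (0:ℤ) (P-1), np (x + (Q * x - 1) % P) = 2 - ee P Q := by
  have hsplit : Finset.Icc (0:ℤ) (P-1) = insert 0 (Finset.Icc (1:ℤ) (P-1)) := by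
    ext x; simp only [mem_Icc, mem_insert]; omega
  have h0 : (0:ℤ) ∉ Finset.Icc (1:ℤ) (P-1) := by simp
  obtain ⟨a, ha⟩ := hPo
  have hterm0 : np ((0:ℤ) + (Q * 0 - 1) % P) = 1 := by
    have : (Q * 0 - 1 : ℤ) % P = P - 1 := by
      apply emod_eq_of_eq_add_mul (c := -1) (by ring) (by omega) (by omega)
    rw [this, show (0:ℤ) + (P-1) = P - 1 by ring, np_congr (b := 0) ⟨a, by omega⟩, np_zero]
  have hterm0' : np ((0:ℤ) + (Q * 0) % P) = 1 := by
    rw [show Q * (0:ℤ) % P = 0 by simp, show ((0:ℤ)+0) = 0 by ring, np_zero]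
  have hcong : ∀ x ∈ Finset.Icc (1:ℤ) (P-1),
      np (x + (Q * x - 1) % P) = -np (x + (Q * x) % P) := by
    intro x hx
    simp only [mem_Icc] at hx
    rw [np_add, np_emod_sub_one hP hco hx.1 hx.2, np_add]
    ring
  rw [ee, hsplit, Finset.sum_insert h0, Finset.sum_insert h0, hterm0, hterm0',
    Finset.sum_congr rfl hcong, Finset.sum_neg_distrib]
  ring

lemma stepA (P Q s : ℤ) (hP : 0 < P) :
    ee (P * (4*P^2-1)) (Q * (4*P^2-1) + 2*s*P) =
      ∑ x ∈ Finset.Icc (0:ℤ) (P-1), ∑ t ∈ Finset.Icc (0:ℤ) (4*P^2-1-1),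
        np (t + (2*s*P*t) % (4*P^2-1) + (t - x) % P
            + ((2*s*P*t) % (4*P^2-1) + Q*x) % P) := by
  set M : ℤ := 4*P^2-1 with hM
  have hM0 : 0 < M := by nlinarith
  have hcoPM : IsCoprime P M := ⟨4*P, -1, by rw [hM]; ring⟩
  set P' : ℤ := P * M with hP'
  set Q' : ℤ := Q * M + 2*s*P with hQ'
  have hP'0 : 0 < P' := mul_pos hP hM0
  rw [ee, ← Finset.sum_product']
  apply Finset.sum_nbij' (i := fun k => (k % P, k % M))
    (j := fun z => z.2 + M * ((z.2 - z.1) % P))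
  · -- maps into product
    intro k hk
    simp only [mem_Icc] at hk
    simp only [mem_product, mem_Icc]
    refine ⟨⟨Int.emod_nonneg _ (by omega), ?_⟩, Int.emod_nonneg _ (by omega), ?_⟩
    · have := Int.emod_lt_of_pos k hP; omega
    · have := Int.emod_lt_of_pos k hM0; omega
  · -- maps back into Icc
    rintro ⟨x, t⟩ hz
    simp only [mem_product, mem_Icc] at hz
    simp only [mem_Icc]
    have hc0 : 0 ≤ (t - x) % P := Int.emod_nonneg _ (by omega)
    have hc1 : (t - x) % P < P := Int.emod_lt_of_pos _ hP
    constructor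
    · nlinarith [hz.2.1]
    · nlinarith [hz.2.2, hc1, hM0.le]
  · -- left inverse
    intro k hk
    simp only [mem_Icc] at hk
    have d1 := Int.mul_ediv_add_emod k M
    have d2 := Int.mul_ediv_add_emod k P
    have h5 : k % M - k % P = k / M + P * ((k / P) - 4*P*(k / M)) := by
      linear_combination d1 - d2 - (k / M) * hM
    have h6 : (k % M - k % P) % P = k / M := by
      rw [h5, Int.add_mul_emod_self_left]
      apply Int.emod_eq_of_lt (Int.ediv_nonneg hk.1 hM0.le)
      rw [Int.ediv_lt_iff_lt_mul hM0]
      nlinarith [hk.2]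
    simp only
    rw [h6]; linarith
  · -- right inverse
    rintro ⟨x, t⟩ hz
    simp only [mem_product, mem_Icc] at hz
    have hc0 : 0 ≤ (t - x) % P := Int.emod_nonneg _ (by omega)
    have hc1 : (t - x) % P < P := Int.emod_lt_of_pos _ hP
    have d3 := Int.mul_ediv_add_emod (t - x) P
    have e1 : (t + M * ((t - x) % P)) % P = x := by
      apply emod_eq_of_eq_add_mul (c := (t - x) / P + 4*P*((t-x) % P))
        (by linear_combination - d3 + ((t-x) % P) * hM) hz.1.1 (by omega)
    have e2 : (t + M * ((t - x) % P)) % M = t := by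
      apply emod_eq_of_eq_add_mul (c := (t - x) % P) (by ring) hz.2.1 (by omega)
    simp only
    rw [e1, e2]
  · -- summand equality
    intro k hk
    simp only [mem_Icc] at hk
    -- notation
    set x : ℤ := k % P with hx
    set t : ℤ := k % M with ht
    set c : ℤ := (t - x) % P with hc
    set ρ : ℤ := (2*s*P*t) % M with hρ
    set cc : ℤ := (ρ + Q*x) % P with hcc
    have hc0 : 0 ≤ c := Int.emod_nonneg _ (by omega)
    have hc1 : c < P := Int.emod_lt_of_pos _ hP
    have hρ0 : 0 ≤ ρ := Int.emod_nonneg _ (by omega)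
    have hρ1 : ρ < M := Int.emod_lt_of_pos _ hM0
    have hcc0 : 0 ≤ cc := Int.emod_nonneg _ (by omega)
    have hcc1 : cc < P := Int.emod_lt_of_pos _ hP
    -- k = t + M * c  (left inverse fact, reprove)
    have d1 := Int.mul_ediv_add_emod k M
    have d2 := Int.mul_ediv_add_emod k P
    have h5 : t - x = k / M + P * ((k / P) - 4*P*(k / M)) := by
      rw [ht, hx]; linear_combination d1 - d2 - (k / M) * hM
    have h6 : c = k / M := by
      rw [hc, h5, Int.add_mul_emod_self_left]
      apply Int.emod_eq_of_lt (Int.ediv_nonneg hk.1 hM0.le)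
      rw [Int.ediv_lt_iff_lt_mul hM0]
      nlinarith [hk.2]
    have hkey : k = t + M * c := by rw [h6, ht]; linarith
    -- the crucial emod computation
    have main : (Q' * k) % P' = ρ + M * cc := by
      rw [hP']
      apply emod_mul_eq hcoPM
      · -- P ∣ Q'*k - (ρ + M*cc)
        have df := Int.mul_ediv_add_emod (ρ + Q*x) P
        have dx := Int.mul_ediv_add_emod k P
        refine ⟨4*P*Q*k - Q*(k/P) + 2*s*k - 4*P*cc - ((ρ + Q*x)/P), ?_⟩
        rw [hQ']
        linear_combination (Q*k - cc) * hM + df + Q * dx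
      · -- M ∣ Q'*k - (ρ + M*cc)
        have de := Int.mul_ediv_add_emod (2*s*P*t) M
        refine ⟨Q*k + 2*s*P*c + (2*s*P*t)/M - cc, ?_⟩
        rw [hQ']
        linear_combination - de + (2*s*P) * hkey
      · positivity
      · nlinarith
    show np (k + Q'*k % P') = _
    rw [main]
    apply np_congr
    refine ⟨(2*P^2 - 1) * (c + cc), ?_⟩
    have : k + (ρ + M * cc) - (t + ρ + c + cc) = (M - 1) * (c + cc) := by
      rw [hkey]; ring
    rw [this, hM]; ring

lemma sum_extend (M : ℤ) (hM : 0 ≤ M) (Φ : ℤ → ℤ) :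
    ∑ t ∈ Finset.Icc (0:ℤ) (M-1), Φ t = (∑ t ∈ Finset.Icc (0:ℤ) M, Φ t) - Φ M := by
  have : Finset.Icc (0:ℤ) M = insert M (Finset.Icc (0:ℤ) (M-1)) := by
    ext y; simp only [mem_Icc, mem_insert]; omega
  rw [this, Finset.sum_insert (by simp)]
  ring

lemma stepD (P : ℤ) (hP : 0 < P) (Φ : ℤ → ℤ) :
    ∑ t ∈ Finset.Icc (0:ℤ) (4*P^2-1), Φ t =
      ∑ z ∈ (Finset.Icc (0:ℤ) (2*P-1)) ×ˢ (Finset.Icc (0:ℤ) (2*P-1)), Φ (2*P*z.2 + z.1) := by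
  apply Finset.sum_nbij' (i := fun t => (t % (2*P), t / (2*P)))
    (j := fun z => 2*P*z.2 + z.1)
  · intro t ht
    simp only [mem_Icc] at ht
    simp only [mem_product, mem_Icc]
    have h2P : 0 < 2*P := by omega
    refine ⟨⟨Int.emod_nonneg _ (by omega), ?_⟩, Int.ediv_nonneg ht.1 h2P.le, ?_⟩
    · have := Int.emod_lt_of_pos t h2P; omega
    · have : t / (2*P) < 2*P := by
        rw [Int.ediv_lt_iff_lt_mul h2P]; nlinarith [ht.2]
      omega
  · rintro ⟨i, j⟩ hz
    simp only [mem_product, mem_Icc] at hz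
    simp only [mem_Icc]
    constructor
    · nlinarith [hz.1.1, hz.2.1]
    · nlinarith [hz.1.2, hz.2.2]
  · intro t ht
    simp only
    rw [Int.mul_ediv_add_emod]
  · rintro ⟨i, j⟩ hz
    simp only [mem_product, mem_Icc] at hz
    have h2P : 0 < 2*P := by omega
    have e1 : (2*P*j + i) % (2*P) = i :=
      emod_eq_of_eq_add_mul (c := j) (by ring) hz.1.1 (by omega)
    have e2 : (2*P*j + i) / (2*P) = j := by
      rw [show 2*P*j + i = i + 2*P*j by ring, Int.add_mul_ediv_left _ _ (by omega : 2*P ≠ 0),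
        Int.ediv_eq_zero_of_lt hz.1.1 (by omega)]
      ring
    simp only
    rw [e1, e2]
  · intro t ht
    simp only
    rw [Int.mul_ediv_add_emod]

lemma sum_exception {A : Finset (ℤ×ℤ)} {F G : ℤ×ℤ → ℤ} {a : ℤ×ℤ} (ha : a ∈ A)
    (h : ∀ z ∈ A, z ≠ a → F z = G z) :
    ∑ z ∈ A, F z = (∑ z ∈ A, G z) + (F a - G a) := by
  rw [← Finset.sum_erase_add A F ha, ← Finset.sum_erase_add A G ha,
    Finset.sum_congr rfl (fun z hz => h z (Finset.mem_of_mem_erase hz) (Finset.ne_of_mem_erase hz))]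
  ring

lemma main_step (P Q s : ℤ) (hP : 0 < P) (hPo : Odd P) (hco : IsCoprime P Q)
    (hs : s = 1 ∨ s = -1) :
    ee (P * (4*P^2-1)) (Q * (4*P^2-1) + 2*s*P) = ee P Q - 2*s := by
  obtain ⟨aa, haa⟩ := hPo
  have hM0 : (0:ℤ) < 4*P^2-1 := by nlinarith
  have hB : (0:ℤ) ≤ 2*P-1 := by omega
  rw [stepA P Q s hP]
  rcases hs with rfl | rfl
  · -- s = 1
    have inner : ∀ x ∈ Finset.Icc (0:ℤ) (P-1),
        (∑ t ∈ Finset.Icc (0:ℤ) (4*P^2-1-1),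
          np (t + (2*1*P*t) % (4*P^2-1) + (t - x) % P
              + ((2*1*P*t) % (4*P^2-1) + Q*x) % P)) = -np (x + (Q*x - 1) % P) := by
      intro x hx
      simp only [mem_Icc] at hx
      set M : ℤ := 4*P^2-1 with hM
      set Φ : ℤ → ℤ := fun t =>
        np (t + (2*1*P*t) % M + (t - x) % P + ((2*1*P*t) % M + Q*x) % P) with hΦ
      set h : ℤ×ℤ → ℤ := fun z =>
        np (z.1 + z.2 + (z.1 - x) % P + (z.2 + 2*P*z.1 + Q*x) % P) with hh
      set A := (Finset.Icc (0:ℤ) (2*P-1)) ×ˢ (Finset.Icc (0:ℤ) (2*P-1)) with hA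
      have hcornermem : ((2*P-1, 2*P-1) : ℤ×ℤ) ∈ A := by
        simp only [hA, mem_product, mem_Icc]; omega
      -- pointwise formula away from corner
      have hform : ∀ z ∈ A, z ≠ (2*P-1, 2*P-1) → Φ (2*P*z.2 + z.1) = h z := by
        rintro ⟨i, j⟩ hz hne
        simp only [hA, mem_product, mem_Icc] at hz
        have hρ : (2*1*P*(2*P*j + i)) % M = j + 2*P*i := by
          apply emod_eq_of_eq_add_mul (c := j) (by rw [hM]; ring)
          · nlinarith [hz.1.1, hz.2.1]
          · -- j + 2*P*i < M
            rcases le_or_gt i (2*P-2) with hi | hi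
            · nlinarith [hz.2.2]
            · have hieq : i = 2*P-1 := by omega
              have hjne : j ≠ 2*P-1 := by
                intro hjeq; exact hne (by rw [Prod.ext_iff]; exact ⟨hieq, hjeq⟩)
              have : j ≤ 2*P-2 := by omega
              nlinarith
        have htx : (2*P*j + i - x) % P = (i - x) % P := by
          rw [show 2*P*j + i - x = (i - x) + P*(2*j) by ring, Int.add_mul_emod_self_left]
        simp only [hΦ, hh, hρ, htx]
        apply np_congr
        exact ⟨P*(i+j), by ring⟩
      -- the h-sum vanishes
      have hzero : ∑ z ∈ A, h z = 0 := by
        rw [hA, Finset.sum_product]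
        apply Finset.sum_eq_zero
        intro i _
        apply sum_cancel P hP
        intro j
        have e1 : (j + P + 2*P*i + Q*x) % P = (j + 2*P*i + Q*x) % P := by
          rw [show j + P + 2*P*i + Q*x = (j + 2*P*i + Q*x) + P*1 by ring,
            Int.add_mul_emod_self_left]
        simp only [hh, e1]
        rw [show i + (j+P) + (i-x)%P + (j + 2*P*i + Q*x)%P
            = (i + j + (i-x)%P + (j + 2*P*i + Q*x)%P) + P by ring]
        exact np_add_odd _ ⟨aa, haa⟩
      -- corner value
      have hcorner : h (2*P-1, 2*P-1) = np (x + (Q*x - 1) % P) := by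
        have e1 : (2*P-1 - x) % P = P-1-x :=
          emod_eq_of_eq_add_mul (c := 1) (by ring) (by omega) (by omega)
        have e2 : ((2*P-1) + 2*P*(2*P-1) + Q*x) % P = (Q*x - 1) % P := by
          rw [show (2*P-1) + 2*P*(2*P-1) + Q*x = (Q*x - 1) + P*(4*P) by ring,
            Int.add_mul_emod_self_left]
        simp only [hh, e1, e2]
        apply np_congr
        exact ⟨5*aa + 1 - x, by omega⟩
      calc ∑ t ∈ Finset.Icc (0:ℤ) (M-1), Φ t
          = (∑ t ∈ Finset.Icc (0:ℤ) M, Φ t) - Φ M := sum_extend M hM0.le Φ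
        _ = (∑ z ∈ A, Φ (2*P*z.2 + z.1)) - Φ M := by rw [hM, stepD P hP Φ, ← hA]
        _ = ((∑ z ∈ A, h z) + (Φ (2*P*(2*P-1) + (2*P-1)) - h (2*P-1, 2*P-1))) - Φ M := by
            rw [sum_exception hcornermem hform]
        _ = -np (x + (Q*x - 1) % P) := by
            rw [hzero, hcorner, show 2*P*(2*P-1) + (2*P-1) = M by rw [hM]; ring]
            ring
    rw [Finset.sum_congr rfl inner, Finset.sum_neg_distrib,
      claimA P Q hP ⟨aa, haa⟩ hco]
    ring
  · -- s = -1
    have inner : ∀ x ∈ Finset.Icc (0:ℤ) (P-1),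
        (∑ t ∈ Finset.Icc (0:ℤ) (4*P^2-1-1),
          np (t + (2*(-1)*P*t) % (4*P^2-1) + (t - x) % P
              + ((2*(-1)*P*t) % (4*P^2-1) + Q*x) % P))
          = np ((-x) % P + (Q*x) % P) - np (1 + (-x) % P + (Q*x - 1) % P)
            + np (x + (Q*x) % P) := by
      intro x hx
      simp only [mem_Icc] at hx
      set M : ℤ := 4*P^2-1 with hM
      set Φ : ℤ → ℤ := fun t =>
        np (t + (2*(-1)*P*t) % M + (t - x) % P + ((2*(-1)*P*t) % M + Q*x) % P) with hΦ
      set h : ℤ×ℤ → ℤ := fun z =>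
        np (z.1 + z.2 + 1 + (z.1 - x) % P + (Q*x - 1 - z.2) % P) with hh
      set A := (Finset.Icc (0:ℤ) (2*P-1)) ×ˢ (Finset.Icc (0:ℤ) (2*P-1)) with hA
      have hzeromem : ((0, 0) : ℤ×ℤ) ∈ A := by
        simp only [hA, mem_product, mem_Icc]; omega
      have hform : ∀ z ∈ A, z ≠ (0, 0) → Φ (2*P*z.2 + z.1) = h z := by
        rintro ⟨i, j⟩ hz hne
        simp only [hA, mem_product, mem_Icc] at hz
        have hρ : (2*(-1)*P*(2*P*j + i)) % M = M - j - 2*P*i := by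
          apply emod_eq_of_eq_add_mul (c := -(j+1)) (by rw [hM]; ring)
          · nlinarith [hz.1.2, hz.2.2]
          · -- M - j - 2*P*i < M, i.e. 0 < j + 2*P*i
            rcases eq_or_lt_of_le hz.1.1 with hi | hi
            · have hjne : j ≠ 0 := by
                intro hjeq
                exact hne (by rw [Prod.ext_iff]; exact ⟨hi.symm, hjeq⟩)
              have hj1 : 1 ≤ j := by omega
              subst hi
              simp only [mul_zero]
              omega
            · nlinarith [hz.2.1, hi]
        have htx : (2*P*j + i - x) % P = (i - x) % P := by
          rw [show 2*P*j + i - x = (i - x) + P*(2*j) by ring, Int.add_mul_emod_self_left]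
        have hqx : (M - j - 2*P*i + Q*x) % P = (Q*x - 1 - j) % P := by
          rw [show M - j - 2*P*i + Q*x = (Q*x - 1 - j) + P*(4*P - 2*i) by rw [hM]; ring,
            Int.add_mul_emod_self_left]
        simp only [hΦ, hh, hρ, hqx, htx]
        apply np_congr
        exact ⟨P*j - j - P*i + 2*P^2 - 1, by rw [hM]; ring⟩
      have hzero : ∑ z ∈ A, h z = 0 := by
        rw [hA, Finset.sum_product]
        apply Finset.sum_eq_zero
        intro i _
        apply sum_cancel P hP
        intro j
        have e1 : (Q*x - 1 - (j + P)) % P = (Q*x - 1 - j) % P := by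
          rw [show Q*x - 1 - (j + P) = (Q*x - 1 - j) + P*(-1) by ring,
            Int.add_mul_emod_self_left]
        simp only [hh, e1]
        rw [show i + (j+P) + 1 + (i-x)%P + (Q*x - 1 - j)%P
            = (i + j + 1 + (i-x)%P + (Q*x - 1 - j)%P) + P by ring]
        exact np_add_odd _ ⟨aa, haa⟩
      have hcornermem : ((2*P-1, 2*P-1) : ℤ×ℤ) ∈ A := by
        simp only [hA, mem_product, mem_Icc]; omega
      have hcornerval : Φ M = h (2*P-1, 2*P-1) := by
        have := hform (2*P-1, 2*P-1) hcornermem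
          (by intro hc; rw [Prod.ext_iff] at hc; simp only at hc; omega)
        rw [show 2*P*(2*P-1) + (2*P-1) = M by rw [hM]; ring] at this
        exact this
      have hcorner : h (2*P-1, 2*P-1) = -np (x + (Q*x) % P) := by
        have e1 : (2*P-1 - x) % P = P-1-x :=
          emod_eq_of_eq_add_mul (c := 1) (by ring) (by omega) (by omega)
        have e2 : (Q*x - 1 - (2*P-1)) % P = (Q*x) % P := by
          rw [show Q*x - 1 - (2*P-1) = (Q*x) + P*(-2) by ring, Int.add_mul_emod_self_left]
        simp only [hh, e1, e2]
        rw [np_congr (b := (x + (Q*x)%P) + 1) ⟨5*aa + 1 - x, by omega⟩, np_succ]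
      have hΦ0 : Φ 0 = np ((-x) % P + (Q*x) % P) := by
        simp only [hΦ]; norm_num
      have hh00 : h (0, 0) = np (1 + (-x) % P + (Q*x - 1) % P) := by
        simp only [hh]; norm_num
      calc ∑ t ∈ Finset.Icc (0:ℤ) (M-1), Φ t
          = (∑ t ∈ Finset.Icc (0:ℤ) M, Φ t) - Φ M := sum_extend M hM0.le Φ
        _ = (∑ z ∈ A, Φ (2*P*z.2 + z.1)) - Φ M := by rw [hM, stepD P hP Φ, ← hA]
        _ = ((∑ z ∈ A, h z) + (Φ (2*P*0 + 0) - h (0, 0))) - Φ M := by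
            rw [sum_exception hzeromem hform]
        _ = _ := by
            rw [hzero, hcornerval, hcorner, show 2*P*(0:ℤ) + 0 = 0 by ring, hΦ0, hh00]
            ring
    rw [Finset.sum_congr rfl inner]
    have hsum1 : ∑ x ∈ Finset.Icc (0:ℤ) (P-1),
        (np ((-x) % P + (Q*x) % P) - np (1 + (-x) % P + (Q*x - 1) % P)
          + np (x + (Q*x) % P))
        = (∑ x ∈ Finset.Icc (0:ℤ) (P-1),
            (np ((-x) % P + (Q*x) % P) - np (1 + (-x) % P + (Q*x - 1) % P)))
          + ee P Q := by
      rw [ee, ← Finset.sum_add_distrib]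
    rw [hsum1]
    have hsum2 : ∑ x ∈ Finset.Icc (0:ℤ) (P-1),
        (np ((-x) % P + (Q*x) % P) - np (1 + (-x) % P + (Q*x - 1) % P)) = 2 := by
      have hsplit : Finset.Icc (0:ℤ) (P-1) = insert 0 (Finset.Icc (1:ℤ) (P-1)) := by
        ext y; simp only [mem_Icc, mem_insert]; omega
      rw [hsplit, Finset.sum_insert (by simp)]
      have hx0 : np ((-(0:ℤ)) % P + (Q*0) % P) - np (1 + (-(0:ℤ)) % P + (Q*0 - 1) % P)
          = 2 := by
        have e1 : (-1 : ℤ) % P = P - 1 :=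
          emod_eq_of_eq_add_mul (c := -1) (by ring) (by omega) (by omega)
        norm_num
        rw [e1, show (1:ℤ) + (P-1) = 0 + P by ring, np_add_odd _ ⟨aa, haa⟩, np_zero]
        ring
      rw [hx0]
      have hrest : ∀ y ∈ Finset.Icc (1:ℤ) (P-1),
          np ((-y) % P + (Q*y) % P) - np (1 + (-y) % P + (Q*y - 1) % P) = 0 := by
        intro y hy
        simp only [mem_Icc] at hy
        rw [emod_sub_one hP hco hy.1 hy.2,
          show (1:ℤ) + (-y) % P + ((Q*y) % P - 1) = (-y) % P + (Q*y) % P by ring]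
        ring
      rw [Finset.sum_congr rfl hrest]
      simp
    rw [hsum2]
    ring

lemma pSeq_pos (n : ℕ) : 0 < pSeq n := by
  induction n with
  | zero => norm_num [pSeq]
  | succ n ih =>
    show 0 < pSeq n * (4 * (pSeq n) ^ 2 - 1)
    have : (0:ℤ) < 4 * (pSeq n) ^ 2 - 1 := by nlinarith
    exact mul_pos ih this

lemma pSeq_odd (n : ℕ) : Odd (pSeq n) := by
  induction n with
  | zero => exact ⟨1, by norm_num [pSeq]⟩
  | succ n ih =>
    show Odd (pSeq n * (4 * (pSeq n) ^ 2 - 1))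
    exact ih.mul ⟨2 * (pSeq n)^2 - 1, by ring⟩

lemma q'Seq_odd (ε : ℕ → ℕ) (n : ℕ) : Odd (q'Seq ε n) := by
  induction n with
  | zero => exact ⟨-1, by norm_num [q'Seq]⟩
  | succ n ih =>
    show Odd (q'Seq ε n * (4 * (pSeq n) ^ 2 - 1) + 2 * (-1 : ℤ) ^ (ε n + 1) * pSeq n)
    exact (ih.mul ⟨2 * (pSeq n)^2 - 1, by ring⟩).add_even
      ⟨(-1 : ℤ) ^ (ε n + 1) * pSeq n, by ring⟩

lemma pSeq_coprime (ε : ℕ → ℕ) (n : ℕ) : IsCoprime (pSeq n) (-(q'Seq ε n)) := by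
  induction n with
  | zero =>
    show IsCoprime (pSeq 0) (-(-1 : ℤ))
    rw [neg_neg]
    exact isCoprime_one_right
  | succ n ih =>
    set P := pSeq n with hPdef
    set Q := -(q'Seq ε n) with hQdef
    set u : ℤ := (-1) ^ (ε n) with hu
    have hu2 : u * u = 1 := by
      rw [hu, ← pow_add]
      exact Even.neg_one_pow ⟨ε n, rfl⟩
    have hcPM : IsCoprime P (4*P^2-1) := ⟨4*P, -1, by ring⟩
    have h3 : IsCoprime P (Q * (4*P^2-1)) := ih.mul_right hcPM
    have h4 : IsCoprime P (Q * (4*P^2-1) + 2*u*P) := by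
      have := h3.add_mul_left_right (2*u)
      rwa [show Q * (4*P^2-1) + P*(2*u) = Q * (4*P^2-1) + 2*u*P by ring] at this
    have h5 : IsCoprime (4*P^2-1) (2*u*P) :=
      ⟨-1, 2*u*P, by linear_combination (4*P^2) * hu2⟩
    have h6 : IsCoprime (4*P^2-1) (Q * (4*P^2-1) + 2*u*P) := by
      have := h5.add_mul_left_right Q
      rwa [show 2*u*P + (4*P^2-1)*Q = Q * (4*P^2-1) + 2*u*P by ring] at this
    have hgoal : IsCoprime (P * (4*P^2-1)) (Q * (4*P^2-1) + 2*u*P) := h4.mul_left h6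
    show IsCoprime (P * (4 * P ^ 2 - 1))
      (-(q'Seq ε n * (4 * P ^ 2 - 1) + 2 * (-1 : ℤ) ^ (ε n + 1) * P))
    rwa [show -(q'Seq ε n * (4 * P ^ 2 - 1) + 2 * (-1 : ℤ) ^ (ε n + 1) * P)
        = Q * (4*P^2-1) + 2*u*P by rw [hQdef, hu, pow_succ]; ring]

/-- For every sequence `ε : ℕ → {0,1}` and every `n ≥ 0`,
`d(p(n+1), −q'_ε(n+1)) = d(p(n), −q'_ε(n)) + 2·(−1)^{ε(n)}`. -/
theorem diagElem_recursion (ε : ℕ → ℕ) (hε : ∀ j, ε j = 0 ∨ ε j = 1) (n : ℕ) :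
    diagElem (pSeq (n + 1)) (-(q'Seq ε (n + 1))) =
      diagElem (pSeq n) (-(q'Seq ε n)) + 2 * (-1 : ℤ) ^ (ε n) := by
  have hP : 0 < pSeq n := pSeq_pos n
  have hPo : Odd (pSeq n) := pSeq_odd n
  have hQo : Odd (-(q'Seq ε n)) := (q'Seq_odd ε n).neg
  have hco : IsCoprime (pSeq n) (-(q'Seq ε n)) := pSeq_coprime ε n
  set P := pSeq n with hPdef
  set Q := -(q'Seq ε n) with hQdef
  set s : ℤ := (-1) ^ (ε n) with hs0
  have hs : s = 1 ∨ s = -1 := by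
    rcases hε n with h | h <;> [left; right] <;> rw [hs0, h] <;> norm_num
  have hM0 : (0:ℤ) < 4*P^2-1 := by nlinarith
  have hP' : 0 < P * (4*P^2-1) := mul_pos hP hM0
  have hP'o : Odd (P * (4*P^2-1)) := hPo.mul ⟨2*P^2 - 1, by ring⟩
  have hQ'o : Odd (Q * (4*P^2-1) + 2*s*P) :=
    (hQo.mul ⟨2*P^2 - 1, by ring⟩).add_even ⟨s*P, by ring⟩
  have hkey : pSeq (n+1) = P * (4*P^2 - 1) := rfl
  have hq : -(q'Seq ε (n+1)) = Q * (4*P^2-1) + 2*s*P := by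
    show -(q'Seq ε n * (4 * P ^ 2 - 1) + 2 * (-1 : ℤ) ^ (ε n + 1) * P) = _
    rw [hQdef, hs0, pow_succ]; ring
  rw [hkey, hq, diag_eq _ _ hP' hP'o hQ'o, diag_eq _ _ hP hPo hQo,
    main_step P Q s hP hPo hco hs]
  ring
end

section
/- For every n ≥ 0, the set { |d(p(n), −q'_ε(n))| : ε ranges over all sequences ℕ → {0,1} } has exactly ⌊(n+1)/2⌋ + 1 elements, where |·| denotes absolute value and ⌊·⌋ the floor. -/
open Finset

/-- `(-1)^n` for `n : ℤ`, as an integer. -/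
def E (n : ℤ) : ℤ := (n.negOnePow : ℤ)

lemma E_add (m n : ℤ) : E (m + n) = E m * E n := by
  simp [E, Int.negOnePow_add]

lemma E_zero : E 0 = 1 := by simp [E]
lemma E_one : E 1 = -1 := by simp [E]

lemma E_even (n : ℤ) (h : Even n) : E n = 1 := by
  simp [E, Int.negOnePow_even _ h]

lemma E_add_two_mul (a b : ℤ) : E (a + 2 * b) = E a := by
  rw [E_add, E_even (2*b) ⟨b, by ring⟩, mul_one]

lemma E_succ (a : ℤ) : E (a + 1) = -E a := by
  rw [E_add, E_one, mul_neg_one]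

lemma E_odd_mul (Q a : ℤ) (hQ : Odd Q) : E (Q * a) = E a := by
  obtain ⟨t, ht⟩ := hQ
  have h : Q * a = a + 2 * (t * a) := by rw [ht]; ring
  rw [h, E_add_two_mul]

lemma sum_shift (g : ℤ → ℤ) (a b c : ℤ) :
    ∑ k ∈ Ico (c + a) (c + b), g k = ∑ k ∈ Ico a b, g (c + k) := by
  rw [← Finset.map_add_left_Ico, Finset.sum_map]
  rfl

lemma sum_flip_block (g : ℤ → ℤ) (T : ℤ) (hT : 0 < T) (hg : ∀ x, g (x + T) = -g x)
    (s : ℤ) : ∑ k ∈ Ico s (s + 2*T), g k = 0 := by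
  have hsplit : ∑ k ∈ Ico s (s + T), g k + ∑ k ∈ Ico (s + T) (s + 2*T), g k
      = ∑ k ∈ Ico s (s + 2*T), g k := by
    rw [← Finset.sum_union (Finset.Ico_disjoint_Ico_consecutive s (s+T) (s+2*T)),
      Finset.Ico_union_Ico_eq_Ico (by omega) (by omega)]
  have h2 : ∑ k ∈ Ico (s + T) (s + 2*T), g k = ∑ k ∈ Ico s (s + T), g (T + k) := by
    have := sum_shift g s (s + T) T
    rw [show T + s = s + T by ring, show T + (s + T) = s + 2*T by ring] at this
    exact this
  have h3 : ∀ k, g (T + k) = - g k := fun k => by rw [add_comm]; exact hg k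
  rw [← hsplit, h2]
  simp [h3]

lemma sum_flip_zero (g : ℤ → ℤ) (T : ℤ) (hT : 0 < T) (hg : ∀ x, g (x + T) = -g x) :
    ∀ (K : ℕ) (s : ℤ), ∑ k ∈ Ico s (s + 2*T*K), g k = 0 := by
  intro K
  induction K with
  | zero => intro s; simp
  | succ n ih =>
    intro s
    have hsplit : ∑ k ∈ Ico s (s + 2*T) , g k + ∑ k ∈ Ico (s + 2*T) (s + 2*T*(n+1)), g k
        = ∑ k ∈ Ico s (s + 2*T*(n+1)), g k := by
      rw [← Finset.sum_union (Finset.Ico_disjoint_Ico_consecutive _ _ _),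
        Finset.Ico_union_Ico_eq_Ico (by nlinarith) (by push_cast; nlinarith)]
    have hc : s + 2*T*((n:ℕ)+1 : ℕ) = s + 2*T*((n:ℤ)+1) := by push_cast; ring
    rw [hc, ← hsplit, sum_flip_block g T hT hg s]
    have h2 : s + 2*T*((n:ℤ)+1) = (s + 2*T) + 2*T*n := by ring
    rw [h2, ih (s + 2*T)]
    simp

/-- decompose a sum over `[0, A*B)` into a double sum, `k = a*B + r`. -/
lemma sum_grid (f : ℤ → ℤ) (B : ℤ) (hB : 0 < B) :
    ∀ (A : ℕ), ∑ k ∈ Ico (0:ℤ) (A*B), f k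
      = ∑ a ∈ Ico (0:ℤ) (A:ℤ), ∑ r ∈ Ico (0:ℤ) B, f (a*B + r) := by
  intro A
  induction A with
  | zero => simp
  | succ n ih =>
    have hsplit : ∑ k ∈ Ico (0:ℤ) ((n:ℤ)*B), f k + ∑ k ∈ Ico ((n:ℤ)*B) (((n:ℤ)+1)*B), f k
        = ∑ k ∈ Ico (0:ℤ) (((n:ℤ)+1)*B), f k := by
      rw [← Finset.sum_union (Finset.Ico_disjoint_Ico_consecutive _ _ _),
        Finset.Ico_union_Ico_eq_Ico (by positivity) (by nlinarith)]
    have hshift : ∑ k ∈ Ico ((n:ℤ)*B) (((n:ℤ)+1)*B), f k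
        = ∑ r ∈ Ico (0:ℤ) B, f ((n:ℤ)*B + r) := by
      have := sum_shift f 0 B ((n:ℤ)*B)
      rw [add_zero] at this
      rw [show ((n:ℤ)+1)*B = (n:ℤ)*B + B by ring, this]
    have hA : ((n+1 : ℕ) : ℤ) = (n:ℤ) + 1 := by push_cast; ring
    rw [hA, ← hsplit, ih, hshift,
      show ((n:ℤ) + 1) = (n:ℤ) + 1 from rfl]
    have : Ico (0:ℤ) ((n:ℤ)+1) = insert (n:ℤ) (Ico (0:ℤ) (n:ℤ)) := by
      ext x; simp [Finset.mem_Ico, Finset.mem_insert]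
    rw [this, Finset.sum_insert (by simp)]
    ring

/-- the sum `S(p,q) = ∑_{k=1}^{p-1} (-1)^{⌊qk/p⌋}`, in integer-division form. -/
noncomputable def Ssum (p q : ℤ) : ℤ := ∑ k ∈ Ico (1:ℤ) p, E (q * k / p)

lemma diagElem_eq_Ssum (p q : ℤ) (hp : 0 < p) :
    (-∑ k ∈ Finset.Icc (1 : ℤ) (p - 1), ((⌊(q : ℚ) * (k : ℚ) / (p : ℚ)⌋).negOnePow : ℤ))
      = - Ssum p q := by
  rw [Ssum, show Finset.Ico (1:ℤ) p = Finset.Icc (1:ℤ) (p-1) by ext x; simp]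
  congr 1
  apply Finset.sum_congr rfl
  intro k _
  congr 2
  have h1 : (q : ℚ) * (k : ℚ) = ((q * k : ℤ) : ℚ) := by push_cast; ring
  have h3 : ((p.toNat:ℕ):ℚ) = (p:ℚ) := by
    exact_mod_cast congrArg (Int.cast : ℤ → ℚ) (Int.toNat_of_nonneg hp.le)
  rw [h1, ← h3, Rat.floor_intCast_div_natCast, Int.toNat_of_nonneg hp.le]

lemma neg_ediv (p x : ℤ) (hp : 0 < p) (h : ¬ p ∣ x) : (-x) / p = -(x/p) - 1 := by
  have hx := Int.emod_add_mul_ediv x p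
  have h1 : 0 ≤ x % p := Int.emod_nonneg x (by omega)
  have h2 : x % p < p := Int.emod_lt_of_pos x hp
  have h3 : x % p ≠ 0 := fun hc => h (Int.dvd_of_emod_eq_zero hc)
  have : (-x) / p = -(x/p) - 1 ∧ (-x) % p = p - x % p := by
    rw [Int.ediv_emod_unique hp]
    have hr : p * (-(x/p) - 1) = -(p*(x/p)) - p := by ring
    refine ⟨by omega, by omega, by omega⟩
  exact this.1

lemma Ssum_reflect (p q : ℤ) (hp : 0 < p) (h : ∀ k, 0 < k → k < p → ¬ p ∣ q * k) :
    Ssum p (2*p - q) = - Ssum p q := by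
  rw [Ssum, Ssum, ← Finset.sum_neg_distrib]
  apply Finset.sum_congr rfl
  intro k hk
  simp only [Finset.mem_Ico] at hk
  have hnd : ¬ p ∣ q * k := h k (by omega) hk.2
  have : (2*p - q) * k = -(q*k) + p * (2*k) := by ring
  rw [this, Int.add_mul_ediv_left _ _ (by omega), neg_ediv p (q*k) hp hnd]
  have : -(q * k / p) - 1 + 2 * k = (q * k / p) + 1 + 2 * (k - (q*k/p) - 1) := by ring
  rw [this, E_add_two_mul, E_succ]


lemma parity_decomp (p Q a r : ℤ) (hp : 3 ≤ p) (hQ0 : 0 < Q)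
    (ha0 : 0 ≤ a) (ham : a < 4*p^2 - 1) (hr0 : 0 ≤ r) (hrp : r < p) :
    (Q*(4*p^2-1) + 2*p) * (a*p + r) / (p*(4*p^2-1))
      = Q*a + (a + 2*Q*r) / (2*p)
        + (if ((a + 2*Q*r) % (2*p) = 2*p - 1 ∧ p*(4*p^2-1) ≤ p*a + 4*p^2*r) then 1 else 0) := by
  set m : ℤ := 4*p^2 - 1 with hm
  set P : ℤ := p * m with hP
  have hPpos : 0 < P := by rw [hP, hm]; nlinarith
  have h2p : (0:ℤ) < 2*p := by omega
  set X : ℤ := 2*p^2*a + (Q*m + 2*p)*r with hX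
  have key1 : (Q*m + 2*p) * (a*p + r) = X + P * (Q*a) := by rw [hX, hP, hm]; ring
  rw [key1, Int.add_mul_ediv_left _ _ (by omega : P ≠ 0)]
  have key2 : X / P = (2*p*X) / (2*p*P) := (Int.mul_ediv_mul_of_pos _ _ h2p).symm
  set v : ℤ := (a + 2*Q*r) / (2*p) with hv
  set w : ℤ := (a + 2*Q*r) % (2*p) with hw
  set T : ℤ := p*a + (m+1)*r with hT
  have hvw : a + 2*Q*r = 2*p*v + w := (Int.mul_ediv_add_emod _ _).symm
  have hw0 : 0 ≤ w := Int.emod_nonneg _ (by omega)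
  have hw2p : w < 2*p := Int.emod_lt_of_pos _ h2p
  have hT0 : 0 ≤ T := by rw [hT, hm]; nlinarith
  have hT2P : T < 2*P := by rw [hT, hP, hm]; nlinarith
  have e1 : 2*p*X = P*(a + 2*Q*r) + T := by rw [hX, hP, hT, hm]; ring
  rw [hvw] at e1
  have key3 : 2*p*X = (w*P + T) + (2*p*P)*v := by linear_combination e1
  have h2pP : (2*p*P) ≠ 0 := by nlinarith
  have hcond : P ≤ p*a + 4*p^2*r ↔ P ≤ T := by
    rw [hT, hm]; constructor <;> intro h <;> nlinarith
  have hdiv : (w*P + T) / (2*p*P)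
      = (if (w = 2*p-1 ∧ P ≤ p*a + 4*p^2*r) then 1 else 0) := by
    by_cases hc : w = 2*p-1 ∧ P ≤ p*a + 4*p^2*r
    · rw [if_pos hc]
      obtain ⟨hc1, hc2⟩ := hc
      rw [hcond] at hc2
      have h4 : w*P + T = (T - P) + (2*p*P)*1 := by rw [hc1]; ring
      rw [h4, Int.add_mul_ediv_left _ _ h2pP,
        Int.ediv_eq_zero_of_lt (by omega) (by nlinarith)]
      norm_num
    · rw [if_neg hc]
      apply Int.ediv_eq_zero_of_lt
        (by nlinarith [mul_nonneg hw0 hPpos.le])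
      rcases not_and_or.mp hc with h1 | h2
      · have hwle : w ≤ 2*p - 2 := by omega
        have := mul_le_mul_of_nonneg_right hwle hPpos.le
        linarith
      · rw [hcond] at h2
        have hTP : T < P := by omega
        have hwle : w ≤ 2*p - 1 := by omega
        have := mul_le_mul_of_nonneg_right hwle hPpos.le
        linarith
  rw [key2, key3, Int.add_mul_ediv_left _ _ h2pP, hdiv]
  ring


lemma Hsum (p b : ℤ) (hp : 3 ≤ p) (hb : 0 ≤ b) (hbe : Even b) :
    ∑ a ∈ Ico (0:ℤ) (4*p^2 - 1), E (a + (a+b)/(2*p))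
      = E (b/(2*p) + (if (2*p) ∣ b then 1 else 0)) := by
  have h2p : (0:ℤ) < 2*p := by omega
  set g : ℤ → ℤ := fun a => E (a + (a+b)/(2*p)) with hg
  have hflip : ∀ x, g (x + 2*p) = -g x := by
    intro x
    have h1 : x + 2*p + b = (x + b) + (2*p)*1 := by ring
    simp only [hg]
    rw [h1, Int.add_mul_ediv_left _ _ (by omega : (2:ℤ)*p ≠ 0)]
    have h2 : x + 2*p + ((x+b)/(2*p) + 1) = (x + (x+b)/(2*p) + 1) + 2*p := by ring
    rw [h2, E_add_two_mul (x + (x+b)/(2*p) + 1) p, E_succ]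
  have hz : ∑ a ∈ Ico (0:ℤ) (0 + 2*(2*p)*(p.toNat : ℕ)), g a = 0 :=
    sum_flip_zero g (2*p) h2p hflip p.toNat 0
  have hcast : (0:ℤ) + 2*(2*p)*((p.toNat : ℕ):ℤ) = 4*p^2 := by
    rw [Int.toNat_of_nonneg (by omega : (0:ℤ) ≤ p)]; ring
  rw [hcast] at hz
  have hNpos : (0:ℤ) < 4*p^2 := by positivity
  have hins : Ico (0:ℤ) (4*p^2) = insert (4*p^2 - 1) (Ico (0:ℤ) (4*p^2 - 1)) := by
    generalize hN : (4*p^2 : ℤ) = N at hNpos ⊢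
    ext x; simp only [Finset.mem_Ico, Finset.mem_insert]; omega
  rw [hins, Finset.sum_insert (by simp)] at hz
  have hmain : ∑ a ∈ Ico (0:ℤ) (4*p^2 - 1), g a = - g (4*p^2 - 1) := by linarith
  rw [hmain]
  set v : ℤ := b / (2*p) with hv
  set w : ℤ := b % (2*p) with hwd
  have hvw : b = 2*p*v + w := (Int.mul_ediv_add_emod _ _).symm
  have hw0 : 0 ≤ w := Int.emod_nonneg _ (by omega)
  have hw2p : w < 2*p := Int.emod_lt_of_pos _ h2p
  have hdvd : (2*p) ∣ b ↔ w = 0 := by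
    rw [hwd]
    exact ⟨fun h => Int.emod_eq_zero_of_dvd h, fun h => Int.dvd_of_emod_eq_zero h⟩
  by_cases hw : w = 0
  · rw [if_pos (hdvd.mpr hw)]
    have hed : (4*p^2 - 1 + b) / (2*p) = 2*p + v - 1 := by
      have : (4*p^2 - 1 + b) / (2*p) = 2*p + v - 1 ∧ (4*p^2 - 1 + b) % (2*p) = 2*p - 1 := by
        rw [Int.ediv_emod_unique h2p]
        refine ⟨by rw [hvw, hw]; ring, by omega, by omega⟩
      exact this.1
    simp only [hg]
    rw [hed]
    have : 4*p^2 - 1 + (2*p + v - 1) = v + 2*(2*p^2 + p - 1) := by ring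
    rw [this, E_add_two_mul, ← E_succ]
  · rw [if_neg (fun hd => hw (hdvd.mp hd))]
    have hed : (4*p^2 - 1 + b) / (2*p) = 2*p + v := by
      have : (4*p^2 - 1 + b) / (2*p) = 2*p + v ∧ (4*p^2 - 1 + b) % (2*p) = w - 1 := by
        rw [Int.ediv_emod_unique h2p]
        refine ⟨by rw [hvw]; ring, by omega, by omega⟩
      exact this.1
    simp only [hg]
    rw [hed]
    have : 4*p^2 - 1 + (2*p + v) = (v + 1) + 2*(2*p^2 + p - 1) := by ring
    rw [this, E_add_two_mul, E_succ]
    simp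

lemma Ezero (p Q r : ℤ) (hp : 3 ≤ p) (hr0 : 0 ≤ r) (hrp : r < p) :
    ∑ a ∈ Ico (0:ℤ) (4*p^2-1),
      (if ((a + 2*Q*r) % (2*p) = 2*p - 1 ∧ p*(4*p^2-1) ≤ p*a + 4*p^2*r)
        then E (a + (a+2*Q*r)/(2*p)) else 0) = 0 := by
  have h2p : (0:ℤ) < 2*p := by omega
  have hcond : ∀ a : ℤ, p*(4*p^2-1) ≤ p*a + 4*p^2*r ↔ 4*p^2-1 - 4*p*r ≤ a := by
    intro a
    constructor <;> intro h <;> nlinarith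
  set W : ℤ := 4*p^2-1 - 4*p*r with hW
  have hW0 : 0 ≤ W := by rw [hW]; nlinarith
  have hWm : W ≤ 4*p^2-1 := by rw [hW]; nlinarith
  set h' : ℤ → ℤ := fun a =>
    (if ((a + 2*Q*r) % (2*p) = 2*p - 1) then E (a + (a+2*Q*r)/(2*p)) else 0) with hh'
  have hstepA : ∑ a ∈ Ico W (4*p^2-1),
      (if ((a + 2*Q*r) % (2*p) = 2*p - 1 ∧ p*(4*p^2-1) ≤ p*a + 4*p^2*r)
        then E (a + (a+2*Q*r)/(2*p)) else 0)
      = ∑ a ∈ Ico (0:ℤ) (4*p^2-1),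
      (if ((a + 2*Q*r) % (2*p) = 2*p - 1 ∧ p*(4*p^2-1) ≤ p*a + 4*p^2*r)
        then E (a + (a+2*Q*r)/(2*p)) else 0) := by
    apply Finset.sum_subset
    · apply Finset.Ico_subset_Ico (by omega) le_rfl
    · intro x hx hx2
      simp only [Finset.mem_Ico] at hx hx2
      rw [if_neg]
      rintro ⟨-, hc2⟩
      rw [hcond] at hc2
      omega
  rw [← hstepA]
  have hstepB : ∑ a ∈ Ico W (4*p^2-1),
      (if ((a + 2*Q*r) % (2*p) = 2*p - 1 ∧ p*(4*p^2-1) ≤ p*a + 4*p^2*r)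
        then E (a + (a+2*Q*r)/(2*p)) else 0)
      = ∑ a ∈ Ico W (4*p^2-1), h' a := by
    apply Finset.sum_congr rfl
    intro a ha
    simp only [Finset.mem_Ico] at ha
    simp only [hh']
    by_cases hc : (a + 2*Q*r) % (2*p) = 2*p - 1
    · rw [if_pos ⟨hc, (hcond a).mpr ha.1⟩, if_pos hc]
    · rw [if_neg (fun h => hc h.1), if_neg hc]
  rw [hstepB]
  have hflip : ∀ x, h' (x + 2*p) = - h' x := by
    intro x
    have hmod : (x + 2*p + 2*Q*r) % (2*p) = (x + 2*Q*r) % (2*p) := by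
      have : x + 2*p + 2*Q*r = (x + 2*Q*r) + (2*p)*1 := by ring
      rw [this, Int.add_mul_emod_self_left]
    simp only [hh', hmod]
    by_cases hc : (x + 2*Q*r) % (2*p) = 2*p - 1
    · rw [if_pos hc, if_pos hc]
      have h1 : x + 2*p + 2*Q*r = (x + 2*Q*r) + (2*p)*1 := by ring
      rw [h1, Int.add_mul_ediv_left _ _ (by omega : (2:ℤ)*p ≠ 0)]
      have h2 : x + 2*p + ((x + 2*Q*r)/(2*p) + 1) = (x + (x+2*Q*r)/(2*p) + 1) + 2*p := by ring
      rw [h2, E_add_two_mul _ p, E_succ]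
    · rw [if_neg hc, if_neg hc, neg_zero]
  have hz := sum_flip_zero h' (2*p) h2p hflip r.toNat W
  have hcast : W + 2*(2*p)*((r.toNat : ℕ):ℤ) = 4*p^2-1 := by
    rw [Int.toNat_of_nonneg hr0, hW]; ring
  rw [hcast] at hz
  exact hz

lemma Ssum_step (p Q : ℤ) (hp : 3 ≤ p) (hQodd : Odd Q) (hQ0 : 0 < Q) (hQ2p : Q < 2*p)
    (hcop : ∀ k, 0 < k → k < p → ¬ p ∣ Q * k) :
    Ssum (p*(4*p^2-1)) (Q*(4*p^2-1) + 2*p) = Ssum p Q - 2 := by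
  have hm3 : (3:ℤ) ≤ 4*p^2-1 := by nlinarith
  have hP : (0:ℤ) < p*(4*p^2-1) := by nlinarith
  have h2p : (0:ℤ) < 2*p := by omega
  set f : ℤ → ℤ := fun k => E ((Q*(4*p^2-1) + 2*p) * k / (p*(4*p^2-1))) with hf
  -- 1) relate Ssum to sum over Ico 0 P
  have hins : Ico (0:ℤ) (p*(4*p^2-1)) = insert 0 (Ico (1:ℤ) (p*(4*p^2-1))) := by
    generalize hN : p*(4*p^2-1) = N at hP ⊢
    ext x; simp only [Finset.mem_Ico, Finset.mem_insert]; omega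
  have hf0 : f 0 = 1 := by
    simp only [hf, mul_zero, Int.zero_ediv, E_zero]
  have h1 : ∑ k ∈ Ico (0:ℤ) (p*(4*p^2-1)), f k = 1 + Ssum (p*(4*p^2-1)) (Q*(4*p^2-1) + 2*p) := by
    rw [hins, Finset.sum_insert (by simp), hf0, Ssum]
  -- 2) grid decomposition
  have hgrid : ∑ k ∈ Ico (0:ℤ) (p*(4*p^2-1)), f k
      = ∑ a ∈ Ico (0:ℤ) (4*p^2-1), ∑ r ∈ Ico (0:ℤ) p, f (a*p + r) := by
    have hcast : (((4*p^2-1 : ℤ).toNat : ℕ) : ℤ) = 4*p^2-1 := Int.toNat_of_nonneg (by omega)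
    have := sum_grid f p (by omega) (4*p^2-1).toNat
    rw [hcast] at this
    rw [show p*(4*p^2-1) = (4*p^2-1)*p by ring, this]
  -- 3) pointwise rewriting
  obtain ⟨t, ht⟩ := hQodd
  have hpoint : ∀ a ∈ Ico (0:ℤ) (4*p^2-1), ∀ r ∈ Ico (0:ℤ) p,
      f (a*p + r) = E (a + (a+2*Q*r)/(2*p))
        + (-2) * (if ((a + 2*Q*r) % (2*p) = 2*p - 1 ∧ p*(4*p^2-1) ≤ p*a + 4*p^2*r)
            then E (a + (a+2*Q*r)/(2*p)) else 0) := by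
    intro a ha r hr
    simp only [Finset.mem_Ico] at ha hr
    simp only [hf]
    rw [parity_decomp p Q a r hp hQ0 ha.1 ha.2 hr.1 hr.2]
    by_cases hc : ((a + 2*Q*r) % (2*p) = 2*p - 1 ∧ p*(4*p^2-1) ≤ p*a + 4*p^2*r)
    · rw [if_pos hc, if_pos hc]
      have he : Q*a + (a+2*Q*r)/(2*p) + 1 = (a + (a+2*Q*r)/(2*p) + 1) + 2*(t*a) := by
        rw [ht]; ring
      rw [he, E_add_two_mul, E_succ]
      ring
    · rw [if_neg hc, if_neg hc]
      have he : Q*a + (a+2*Q*r)/(2*p) + 0 = (a + (a+2*Q*r)/(2*p)) + 2*(t*a) := by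
        rw [ht]; ring
      rw [he, E_add_two_mul]
      ring
  have hsplit : ∑ a ∈ Ico (0:ℤ) (4*p^2-1), ∑ r ∈ Ico (0:ℤ) p, f (a*p + r)
      = (∑ a ∈ Ico (0:ℤ) (4*p^2-1), ∑ r ∈ Ico (0:ℤ) p, E (a + (a+2*Q*r)/(2*p)))
        + (-2) * ∑ a ∈ Ico (0:ℤ) (4*p^2-1), ∑ r ∈ Ico (0:ℤ) p,
            (if ((a + 2*Q*r) % (2*p) = 2*p - 1 ∧ p*(4*p^2-1) ≤ p*a + 4*p^2*r)
              then E (a + (a+2*Q*r)/(2*p)) else 0) := by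
    rw [Finset.mul_sum, ← Finset.sum_add_distrib]
    apply Finset.sum_congr rfl
    intro a ha
    rw [Finset.mul_sum, ← Finset.sum_add_distrib]
    exact Finset.sum_congr rfl (fun r hr => hpoint a ha r hr)
  -- 5) main term A1
  have hA1 : ∑ a ∈ Ico (0:ℤ) (4*p^2-1), ∑ r ∈ Ico (0:ℤ) p, E (a + (a+2*Q*r)/(2*p))
      = -1 + Ssum p Q := by
    rw [Finset.sum_comm]
    have hH : ∀ r ∈ Ico (0:ℤ) p, ∑ a ∈ Ico (0:ℤ) (4*p^2-1), E (a + (a+2*Q*r)/(2*p))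
        = E (Q*r/p + (if p ∣ Q*r then 1 else 0)) := by
      intro r hr
      simp only [Finset.mem_Ico] at hr
      rw [Hsum p (2*Q*r) hp (by nlinarith) ⟨Q*r, by ring⟩]
      have e1 : 2*Q*r = 2*(Q*r) := by ring
      have e2 : (2*Q*r)/(2*p) = Q*r/p := by
        rw [e1, Int.mul_ediv_mul_of_pos _ _ (by norm_num : (0:ℤ) < 2)]
      have e3 : (2*p ∣ 2*Q*r) ↔ (p ∣ Q*r) := by
        rw [e1]
        exact mul_dvd_mul_iff_left (by norm_num : (2:ℤ) ≠ 0)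
      rw [e2]
      congr 1
      simp only [e3]
    rw [Finset.sum_congr rfl hH]
    have hins2 : Ico (0:ℤ) p = insert 0 (Ico (1:ℤ) p) := by
      ext x; simp only [Finset.mem_Ico, Finset.mem_insert]; omega
    rw [hins2, Finset.sum_insert (by simp)]
    have hterm0 : E (Q*(0:ℤ)/p + (if p ∣ Q*(0:ℤ) then 1 else 0)) = -1 := by
      rw [mul_zero, Int.zero_ediv, if_pos (dvd_zero p), zero_add, E_one]
    rw [hterm0]
    congr 1
    rw [Ssum]
    apply Finset.sum_congr rfl
    intro k hk
    simp only [Finset.mem_Ico] at hk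
    rw [if_neg (hcop k (by omega) hk.2), add_zero]
  -- 6) exceptional term A2 = 0
  have hA2 : ∑ a ∈ Ico (0:ℤ) (4*p^2-1), ∑ r ∈ Ico (0:ℤ) p,
      (if ((a + 2*Q*r) % (2*p) = 2*p - 1 ∧ p*(4*p^2-1) ≤ p*a + 4*p^2*r)
        then E (a + (a+2*Q*r)/(2*p)) else 0) = 0 := by
    rw [Finset.sum_comm]
    apply Finset.sum_eq_zero
    intro r hr
    simp only [Finset.mem_Ico] at hr
    exact Ezero p Q r hp hr.1 hr.2
  have htot : 1 + Ssum (p*(4*p^2-1)) (Q*(4*p^2-1) + 2*p) = -1 + Ssum p Q + (-2) * 0 := by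
    rw [← h1, hgrid, hsplit, hA1, hA2]
  linarith

lemma cop_imp (p Q : ℤ) (h : IsCoprime p Q) : ∀ k, 0 < k → k < p → ¬ p ∣ Q*k := by
  intro k hk1 hk2 hd
  have h2 : p ∣ k := h.dvd_of_dvd_mul_left hd
  have := Int.le_of_dvd hk1 h2
  omega

/-- the δ = −1 step. -/
lemma Ssum_step_neg (p Q : ℤ) (hp : 3 ≤ p) (hQodd : Odd Q) (hQ0 : 0 < Q) (hQp : Q < p)
    (hcop : IsCoprime p Q) :
    Ssum (p*(4*p^2-1)) (Q*(4*p^2-1) - 2*p) = Ssum p Q + 2 := by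
  set m : ℤ := 4*p^2-1 with hm
  have hm2p : 2*p < m := by rw [hm]; nlinarith
  have hcpm : IsCoprime p m := ⟨4*p, -1, by rw [hm]; ring⟩
  have hcm2p : IsCoprime m (2*p) := ⟨-1, 2*p, by rw [hm]; ring⟩
  -- coprimality of P with q0 := (2p−Q)m + 2p
  have hq0p : IsCoprime p ((2*p-Q)*m + 2*p) := by
    have h1 : IsCoprime p ((-Q)*m) := (hcop.neg_right).mul_right hcpm
    have := h1.add_mul_left_right (2*m + 2)
    have he : (-Q)*m + p*(2*m+2) = (2*p-Q)*m + 2*p := by ring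
    rwa [he] at this
  have hq0m : IsCoprime m ((2*p-Q)*m + 2*p) := by
    have := hcm2p.add_mul_left_right (2*p - Q)
    have he : 2*p + m*(2*p-Q) = (2*p-Q)*m + 2*p := by ring
    rwa [he] at this
  have hq0 : IsCoprime (p*m) ((2*p-Q)*m + 2*p) := IsCoprime.mul_left hq0p hq0m
  -- step lemma at Q̃ = 2p − Q
  have hstep : Ssum (p*m) ((2*p-Q)*m + 2*p) = Ssum p (2*p-Q) - 2 := by
    have hodd : Odd (2*p - Q) := by
      obtain ⟨t, ht⟩ := hQodd
      exact ⟨p - t - 1, by omega⟩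
    exact Ssum_step p (2*p-Q) hp hodd (by omega) (by omega)
      (cop_imp p (2*p-Q) (by
        have := (hcop.neg_right).add_mul_left_right 2
        have he : -Q + p*2 = 2*p - Q := by ring
        rwa [he] at this))
  -- reflection at level p
  have hrefl_p : Ssum p (2*p - Q) = - Ssum p Q :=
    Ssum_reflect p Q (by omega) (cop_imp p Q hcop)
  -- reflection at level P
  have hPpos : (0:ℤ) < p*m := by nlinarith
  have hrefl_P : Ssum (p*m) (2*(p*m) - ((2*p-Q)*m + 2*p)) = - Ssum (p*m) ((2*p-Q)*m + 2*p) :=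
    Ssum_reflect (p*m) ((2*p-Q)*m + 2*p) hPpos (cop_imp _ _ hq0)
  have he2 : 2*(p*m) - ((2*p-Q)*m + 2*p) = Q*m - 2*p := by ring
  rw [he2] at hrefl_P
  rw [hrefl_P, hstep, hrefl_p]
  ring

lemma main_invariant (ε : ℕ → ℕ) (hε : ∀ j, ε j = 0 ∨ ε j = 1) (n : ℕ) :
    Odd (pSeq n) ∧ 3 ≤ pSeq n ∧ Odd (-(q'Seq ε n)) ∧ 0 < -(q'Seq ε n) ∧
    -(q'Seq ε n) < pSeq n ∧ IsCoprime (pSeq n) (-(q'Seq ε n)) ∧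
    Ssum (pSeq n) (-(q'Seq ε n)) = 2 - 2 * (∑ j ∈ Finset.range n, (-1 : ℤ)^(ε j)) := by
  induction n with
  | zero =>
    refine ⟨⟨1, by norm_num [pSeq]⟩, by norm_num [pSeq], ⟨0, by norm_num [q'Seq]⟩,
      by norm_num [q'Seq], by norm_num [pSeq, q'Seq], ⟨1, -2, by norm_num [pSeq, q'Seq]⟩, ?_⟩
    show Ssum 3 (-(-1)) = 2 - 2 * (∑ j ∈ Finset.range 0, (-1 : ℤ)^(ε j))
    rw [show -(-1:ℤ) = 1 by ring, Ssum, show Finset.Ico (1:ℤ) 3 = {1, 2} from rfl]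
    rw [Finset.sum_insert (by decide), Finset.sum_singleton]
    rw [show (1:ℤ)*1/3 = 0 by decide, show (1:ℤ)*2/3 = 0 by decide, E_zero]
    simp
  | succ n ih =>
    obtain ⟨hpodd, hp3, hQodd, hQ0, hQp, hcop, hS⟩ := ih
    set p : ℤ := pSeq n with hpd
    set Q : ℤ := -(q'Seq ε n) with hQd
    set m : ℤ := 4*p^2 - 1 with hmd
    have hq : q'Seq ε n = -Q := by rw [hQd]; ring
    have hm2p : 2*p < m := by rw [hmd]; nlinarith
    have hmodd : Odd m := ⟨2*p^2 - 1, by rw [hmd]; ring⟩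
    have hppos : (0:ℤ) < p := by omega
    have hpnext : pSeq (n+1) = p * m := by
      show pSeq n * (4 * (pSeq n)^2 - 1) = p * m
      rw [hmd]
    have hcpm : IsCoprime p m := ⟨4*p, -1, by rw [hmd]; ring⟩
    have hcm2p : IsCoprime m (2*p) := ⟨-1, 2*p, by rw [hmd]; ring⟩
    have hPmodd : Odd (p*m) := hpodd.mul hmodd
    have hPm3 : (3:ℤ) ≤ p*m := by nlinarith
    rcases hε n with hε0 | hε1
    · -- ε n = 0 : Q' = Q*m + 2p
      have hQnext : -(q'Seq ε (n+1)) = Q*m + 2*p := by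
        show -(q'Seq ε n * (4 * (pSeq n)^2 - 1) + 2 * (-1:ℤ)^(ε n + 1) * pSeq n)
          = Q*m + 2*p
        rw [hε0, hq, ← hpd, hmd]; ring
      rw [hpnext, hQnext]
      have hQ'odd : Odd (Q*m + 2*p) := by
        obtain ⟨s, hs⟩ := hQodd.mul hmodd
        exact ⟨s + p, by omega⟩
      have hQ'cop : IsCoprime (p*m) (Q*m + 2*p) := by
        apply IsCoprime.mul_left
        · have h1 : IsCoprime p (Q*m) := hcop.mul_right hcpm
          have h2 := h1.add_mul_left_right 2
          have he : Q*m + p*2 = Q*m + 2*p := by ring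
          rwa [he] at h2
        · have h2 := hcm2p.add_mul_left_right Q
          have he : 2*p + m*Q = Q*m + 2*p := by ring
          rwa [he] at h2
      refine ⟨hPmodd, hPm3, hQ'odd, by nlinarith, by nlinarith, hQ'cop, ?_⟩
      have hstep := Ssum_step p Q hp3 hQodd hQ0 (by omega) (cop_imp p Q hcop)
      rw [← hmd] at hstep
      rw [hstep, hS, Finset.sum_range_succ, hε0]
      ring
    · -- ε n = 1 : Q' = Q*m − 2p
      have hQnext : -(q'Seq ε (n+1)) = Q*m - 2*p := by
        show -(q'Seq ε n * (4 * (pSeq n)^2 - 1) + 2 * (-1:ℤ)^(ε n + 1) * pSeq n)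
          = Q*m - 2*p
        rw [hε1, hq, ← hpd, hmd]; ring
      rw [hpnext, hQnext]
      have hQ'odd : Odd (Q*m - 2*p) := by
        obtain ⟨s, hs⟩ := hQodd.mul hmodd
        exact ⟨s - p, by omega⟩
      have hQ'cop : IsCoprime (p*m) (Q*m - 2*p) := by
        apply IsCoprime.mul_left
        · have h1 : IsCoprime p (Q*m) := hcop.mul_right hcpm
          have h2 := h1.add_mul_left_right (-2)
          have he : Q*m + p*(-2) = Q*m - 2*p := by ring
          rwa [he] at h2
        · have h2 := (hcm2p.neg_right).add_mul_left_right Q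
          have he : -(2*p) + m*Q = Q*m - 2*p := by ring
          rwa [he] at h2
      refine ⟨hPmodd, hPm3, hQ'odd, by nlinarith, by nlinarith, hQ'cop, ?_⟩
      have hstep := Ssum_step_neg p Q hp3 hQodd hQ0 hQp hcop
      rw [← hmd] at hstep
      rw [hstep, hS, Finset.sum_range_succ, hε1]
      ring


lemma diagElem_eq (p q : ℤ) (hp : 0 < p) : diagElem p q = - Ssum p q := by
  rw [diagElem]
  exact diagElem_eq_Ssum p q hp

lemma sum_neg_one_pow (ε : ℕ → ℕ) (hε : ∀ j, ε j = 0 ∨ ε j = 1) (n : ℕ) :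
    ∑ j ∈ Finset.range n, (-1 : ℤ)^(ε j) = (n : ℤ) - 2 * ∑ j ∈ Finset.range n, (ε j : ℤ) := by
  have hpt : ∀ j, (-1 : ℤ)^(ε j) = 1 - 2*(ε j : ℤ) := by
    intro j
    rcases hε j with h | h <;> rw [h] <;> norm_num
  rw [Finset.sum_congr rfl (fun j _ => hpt j), Finset.sum_sub_distrib, ← Finset.mul_sum]
  simp [Finset.card_range]

lemma abs_diag_val (ε : ℕ → ℕ) (hε : ∀ j, ε j = 0 ∨ ε j = 1) (n : ℕ) :
    |diagElem (pSeq n) (-(q'Seq ε n))|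
      = |2*((n : ℤ) - 2 * ∑ j ∈ Finset.range n, (ε j : ℤ)) - 2| := by
  obtain ⟨-, hp3, -, -, -, -, hS⟩ := main_invariant ε hε n
  rw [diagElem_eq _ _ (by omega), hS, sum_neg_one_pow ε hε n]
  rw [show -(2 - 2*((n : ℤ) - 2 * ∑ j ∈ Finset.range n, (ε j : ℤ)))
      = 2*((n : ℤ) - 2 * ∑ j ∈ Finset.range n, (ε j : ℤ)) - 2 by ring]

/-- For every `n ≥ 0`, the set `{ |d(p(n), −q'_ε(n))| : ε : ℕ → {0,1} }` has exactly
`⌊(n+1)/2⌋ + 1` elements. -/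
theorem card_abs_diagElem (n : ℕ) :
    Set.ncard {x : ℤ | ∃ ε : ℕ → ℕ, (∀ j, ε j = 0 ∨ ε j = 1) ∧
        x = |diagElem (pSeq n) (-(q'Seq ε n))|} = (n + 1) / 2 + 1 := by
  have hset : {x : ℤ | ∃ ε : ℕ → ℕ, (∀ j, ε j = 0 ∨ ε j = 1) ∧
        x = |diagElem (pSeq n) (-(q'Seq ε n))|}
      = ↑((Finset.range (n+1)).image (fun b : ℕ => |2*((n : ℤ) - 2*(b:ℤ)) - 2|)) := by
    ext x
    simp only [Set.mem_setOf_eq, Finset.coe_image, Set.mem_image, Finset.mem_coe,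
      Finset.mem_range]
    constructor
    · rintro ⟨ε, hε, hx⟩
      refine ⟨∑ j ∈ Finset.range n, ε j, ?_, ?_⟩
      · have hb : ∑ j ∈ Finset.range n, ε j ≤ n := by
          calc ∑ j ∈ Finset.range n, ε j ≤ ∑ j ∈ Finset.range n, 1 := by
                apply Finset.sum_le_sum
                intro j _
                rcases hε j with h | h <;> omega
            _ = n := by simp
        omega
      · rw [hx, abs_diag_val ε hε n]
        congr 2
        push_cast
        ring
    · rintro ⟨b, hb, hx⟩
      refine ⟨fun j => if j < b then 1 else 0, fun j => by by_cases h : j < b <;> simp [h], ?_⟩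
      rw [abs_diag_val _ (fun j => by by_cases h : j < b <;> simp [h]) n]
      have h2 : (Finset.range n).filter (fun j => j < b) = Finset.range b := by
        ext j; simp only [Finset.mem_filter, Finset.mem_range]; omega
      have hsum : ∑ j ∈ Finset.range n, ((if j < b then 1 else 0 : ℕ) : ℤ) = (b : ℤ) := by
        have h1 : ∀ j ∈ Finset.range n, ((if j < b then 1 else 0 : ℕ) : ℤ)
            = if j < b then (1:ℤ) else 0 := by
          intro j _; by_cases h : j < b <;> simp [h]
        rw [Finset.sum_congr rfl h1, ← Finset.sum_filter, h2, Finset.sum_const,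
          Finset.card_range]
        simp
      rw [hsum, ← hx]
  rw [hset, Set.ncard_coe_finset]
  have himg : (Finset.range (n+1)).image (fun b : ℕ => |2*((n : ℤ) - 2*(b:ℤ)) - 2|)
      = (Finset.range ((n+1)/2 + 1)).image (fun i : ℕ => 2*(n:ℤ) + 2 - 4*(i:ℤ)) := by
    ext x
    simp only [Finset.mem_image, Finset.mem_range]
    constructor
    · rintro ⟨b, hb, hx⟩
      by_cases hc : 2*b ≤ n - 1 ∧ 1 ≤ n
      · refine ⟨b + 1, by omega, ?_⟩
        rw [← hx, abs_of_nonneg (by push_cast; omega)]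
        push_cast; ring
      · refine ⟨n - b, by omega, ?_⟩
        rw [← hx, abs_of_nonpos (by push_cast; omega)]
        push_cast; omega
    · rintro ⟨i, hi, hx⟩
      rcases Nat.eq_zero_or_pos i with hi0 | hipos
      · refine ⟨n, by omega, ?_⟩
        rw [← hx, hi0, abs_of_nonpos (by push_cast; omega)]
        push_cast; ring
      · refine ⟨i - 1, by omega, ?_⟩
        rw [← hx, abs_of_nonneg (by push_cast; omega)]
        push_cast [hipos]; omega
  rw [himg, Finset.card_image_of_injOn (fun i hi j hj hij => by
    simp only [Finset.mem_coe, Finset.mem_range] at hi hj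
    omega), Finset.card_range]
end
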